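/- Let A ⊂ L^p (0 ≤ p ≤ ∞) be an acceptance set containing 0 and S = (S_0, S_T) a traded asset. (i) If ρ_{A,S} is cash subadditive, then S_T − S_0·1_Ω ∈ closure(A). (ii) If A is coherent and S_T − S_0·1_Ω ∈ A, then ρ_{A,S} is cash subadditive. In particular, if A is closed and coherent, then ρ_{A,S} is cash subadditive if and only if S_T − S_0·1_Ω ∈ A. -/

import Mathlib

open MeasureTheory Filter Topology ENNReal

variable {Ω : Type*} [MeasureSpace Ω] [IsProbabilityMeasure (volume : Measure Ω)]

/-- The risk measure ρ_{A,S}. -/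
noncomputable def rho (p : ℝ≥0∞) [Fact (1 ≤ p)] (A : Set (Lp ℝ p (volume : Measure Ω)))
    (S0 : ℝ) (ST : Lp ℝ p (volume : Measure Ω)) (x : Lp ℝ p (volume : Measure Ω)) : EReal :=
  sInf ((fun r : ℝ => (r : EReal)) '' {r : ℝ | x + (r / S0) • ST ∈ A})

/-- The constant function 1 as an element of Lᵖ. -/
noncomputable def oneLp (p : ℝ≥0∞) : Lp ℝ p (volume : Measure Ω) :=
  (memLp_const (1 : ℝ)).toLp _

/-- ρ is cash subadditive: ρ(X + λ·1) ≥ ρ(X) − λ for all λ > 0. -/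
def CashSubadditive (p : ℝ≥0∞) [Fact (1 ≤ p)]
    (ρ : Lp ℝ p (volume : Measure Ω) → EReal) : Prop :=
  ∀ (x : Lp ℝ p (volume : Measure Ω)) (l : ℝ), 0 < l →
    ρ x - (l : EReal) ≤ ρ (x + l • oneLp p)

private lemma lp_smul_nonneg (p : ℝ≥0∞) [Fact (1 ≤ p)] {c : ℝ} (hc : 0 ≤ c)
    {f : Lp ℝ p (volume : Measure Ω)} (hf : 0 ≤ f) : 0 ≤ c • f := by
  rw [← Lp.coeFn_nonneg] at hf ⊢
  filter_upwards [hf, Lp.coeFn_smul c f] with ω h1 h2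
  rw [h2]; exact mul_nonneg hc h1

/-- (i) if ρ_{A,S} is cash subadditive then S_T − S₀·1 ∈ closure(A);
(ii) if A is coherent and S_T − S₀·1 ∈ A then ρ_{A,S} is cash subadditive; in
particular for A closed and coherent, cash subadditivity holds iff S_T − S₀·1 ∈ A. -/
theorem cashSubadditive_characterization (p : ℝ≥0∞) [Fact (1 ≤ p)]
    (A : Set (Lp ℝ p (volume : Measure Ω)))
    (hAne : A.Nonempty) (hAproper : A ≠ Set.univ)
    (hmono : ∀ x ∈ A, ∀ y, x ≤ y → y ∈ A) (h0 : (0 : Lp ℝ p (volume : Measure Ω)) ∈ A)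
    (S0 : ℝ) (hS0 : 0 < S0)
    (ST : Lp ℝ p (volume : Measure Ω)) (hST : 0 ≤ ST) (hSTne : ST ≠ 0) :
    (CashSubadditive p (rho p A S0 ST) → ST - S0 • oneLp p ∈ closure A) ∧
    ((Convex ℝ A ∧ ∀ c : ℝ, 0 ≤ c → ∀ a ∈ A, c • a ∈ A) → ST - S0 • oneLp p ∈ A →
      CashSubadditive p (rho p A S0 ST)) ∧
    (IsClosed A → (Convex ℝ A ∧ ∀ c : ℝ, 0 ≤ c → ∀ a ∈ A, c • a ∈ A) →
      (CashSubadditive p (rho p A S0 ST) ↔ ST - S0 • oneLp p ∈ A)) := by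
  have hS0ne : S0 ≠ 0 := hS0.ne'
  -- Part (i)
  have part1 : CashSubadditive p (rho p A S0 ST) → ST - S0 • oneLp p ∈ closure A := by
    intro hcs
    have h1 : rho p A S0 ST 0 ≤ (0 : EReal) := by
      apply sInf_le
      exact ⟨0, by simp [h0], rfl⟩
    have h2 := hcs (-(S0 • oneLp p)) S0 hS0
    rw [neg_add_cancel] at h2
    have h3 : rho p A S0 ST (-(S0 • oneLp p)) ≤ ((S0 : ℝ) : EReal) := by
      have h4 := (EReal.sub_le_iff_le_add (.inl (EReal.coe_ne_bot S0))
        (.inl (EReal.coe_ne_top S0))).1 (h2.trans h1)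
      simpa using h4
    rw [Metric.mem_closure_iff]
    intro ε hε
    set N := ‖ST‖ with hN
    have hNnn : 0 ≤ N := norm_nonneg _
    set δ := ε * S0 / (N + 1) with hδdef
    have hδ : 0 < δ := by positivity
    have h5 : rho p A S0 ST (-(S0 • oneLp p)) < ((S0 + δ : ℝ) : EReal) :=
      h3.trans_lt (by exact_mod_cast lt_add_of_pos_right S0 hδ)
    obtain ⟨_, ⟨r, hr, rfl⟩, hlt⟩ := sInf_lt_iff.1 h5
    have hrlt : r < S0 + δ := EReal.coe_lt_coe_iff.1 hlt
    set r' := max r S0 with hr'def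
    have hr'ge : S0 ≤ r' := le_max_right r S0
    have hr'lt : r' < S0 + δ := max_lt hrlt (lt_add_of_pos_right S0 hδ)
    have hr'mem : -(S0 • oneLp p) + (r' / S0) • ST ∈ A := by
      apply hmono _ hr
      apply add_le_add_right
      have h6 : (0 : Lp ℝ p (volume : Measure Ω)) ≤ ((r' - r) / S0) • ST :=
        lp_smul_nonneg p (div_nonneg (sub_nonneg.2 (le_max_left r S0)) hS0.le) hST
      have h7 : ((r' - r) / S0) • ST = (r' / S0) • ST - (r / S0) • ST := by
        rw [sub_div, sub_smul]
      exact sub_nonneg.1 (h7 ▸ h6)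
    refine ⟨-(S0 • oneLp p) + (r' / S0) • ST, hr'mem, ?_⟩
    rw [dist_eq_norm]
    have h8 : ST - S0 • oneLp p - (-(S0 • oneLp p) + (r' / S0) • ST)
        = (1 - r' / S0) • ST := by
      rw [sub_smul, one_smul]; abel
    rw [h8, norm_smul, Real.norm_eq_abs]
    have h9 : |1 - r' / S0| = r' / S0 - 1 := by
      rw [abs_sub_comm, abs_of_nonneg]
      rw [sub_nonneg, le_div_iff₀ hS0, one_mul]
      exact hr'ge
    rw [h9]
    have h10 : r' / S0 - 1 < δ / S0 := by
      rw [div_sub' hS0ne, div_lt_div_iff₀ hS0 hS0]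
      nlinarith
    calc (r' / S0 - 1) * N ≤ δ / S0 * N := by
          apply mul_le_mul_of_nonneg_right h10.le hNnn
      _ = ε / (N + 1) * N := by
          rw [hδdef]; field_simp
      _ < ε := by
          rw [div_mul_eq_mul_div, div_lt_iff₀ (by positivity)]
          nlinarith
  -- Part (ii)
  have part2 : (Convex ℝ A ∧ ∀ c : ℝ, 0 ≤ c → ∀ a ∈ A, c • a ∈ A) →
      ST - S0 • oneLp p ∈ A → CashSubadditive p (rho p A S0 ST) := by
    rintro ⟨hconv, hcone⟩ hmemA x l hl
    have hadd : ∀ a ∈ A, ∀ b ∈ A, a + b ∈ A := by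
      intro a ha b hb
      have h1 := hconv ha hb (by norm_num : (0:ℝ) ≤ 1/2) (by norm_num : (0:ℝ) ≤ 1/2)
        (by norm_num)
      have h2 := hcone 2 (by norm_num) _ h1
      have h3 : (2:ℝ) • ((1/2 : ℝ) • a + (1/2 : ℝ) • b) = a + b := by
        rw [smul_add, smul_smul, smul_smul]; norm_num
      rwa [h3] at h2
    apply le_sInf
    rintro _ ⟨r, hr, rfl⟩
    -- hr : x + l • oneLp p + (r / S0) • ST ∈ A
    have hkey : x + ((r + l) / S0) • ST ∈ A := by
      have h1 : (l / S0) • (ST - S0 • oneLp p) ∈ A :=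
        hcone _ (div_nonneg hl.le hS0.le) _ hmemA
      have h2 := hadd _ hr _ h1
      have e1 : (l / S0) • (ST - S0 • oneLp p) = (l / S0) • ST - l • oneLp p := by
        rw [smul_sub, smul_smul, div_mul_cancel₀ _ hS0ne]
      have e2 : x + l • oneLp p + (r / S0) • ST + (l / S0) • (ST - S0 • oneLp p)
          = x + ((r + l) / S0) • ST := by
        rw [e1, add_div, add_smul]; abel
      rwa [e2] at h2
    have hle : rho p A S0 ST x ≤ ((r + l : ℝ) : EReal) :=
      sInf_le ⟨r + l, hkey, rfl⟩
    have h3 := add_le_add_left hle (-((l : ℝ) : EReal))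
    rw [← sub_eq_add_neg, ← sub_eq_add_neg] at h3
    have h4 : ((r + l : ℝ) : EReal) - ((l : ℝ) : EReal) = ((r : ℝ) : EReal) := by
      rw [← EReal.coe_sub]; norm_num
    exact le_of_le_of_eq h3 h4
  refine ⟨part1, part2, fun hclosed hcoh => ⟨fun hcs => ?_, part2 hcoh⟩⟩
  have := part1 hcs
  rwa [hclosed.closure_eq] at this
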